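/- Fix an integer a ≥ 2 and let n be divisible by a(a+1)(a²+2a+3) so that the blocks below have integer lengths. Color [1,n] by [R, B, R] in proportions 1 : (a + 1/(a+1)) : 1/(a+1), i.e. with red block of length r·n where r = (a+1)/(a²+2a+3), etc. Then the number of monochromatic triples (x, y, x+ay), counted as pairs (x,y) with x + ay ≤ n and c(x)=c(y)=c(x+ay), equals n²/(2a(a²+2a+3)) + O(n). -/

import Mathlib

open Finset

lemma gauss (q : ℕ) : (∑ i ∈ Icc 1 q, (i:ℝ)) = q*(q+1)/2 := by
  induction q with
  | zero => simp
  | succ k ih =>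
    rw [Finset.sum_Icc_succ_top (by omega)]
    push_cast
    rw [ih]; ring

lemma tri_card (a n K : ℕ) (ha : 1 ≤ a) (hK : K ≤ n) :
    (((Icc 1 n ×ˢ Icc 1 n).filter fun p => p.1 + a * p.2 ≤ K).card)
      = ∑ y ∈ Icc 1 (K / a), (K - a * y) := by
  rw [Finset.card_filter, Finset.sum_product_right]
  have h1 : ∀ y, ∑ x ∈ Icc 1 n, (if x + a * y ≤ K then 1 else 0)
      = (K - a * y) := by
    intro y
    rw [← Finset.card_filter]
    have : (Icc 1 n).filter (fun x => x + a * y ≤ K) = Icc 1 (K - a * y) := by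
      ext z
      simp only [Finset.mem_filter, Finset.mem_Icc]
      omega
    rw [this, Nat.card_Icc]
    omega
  have h2 : ∀ y ∈ Icc 1 n, y ∉ Icc 1 (K / a) → K - a * y = 0 := by
    intro y hy hy'
    simp only [Finset.mem_Icc] at hy hy'
    have e1 : a * (K / a) + K % a = K := Nat.div_add_mod K a
    have e2 : K % a < a := Nat.mod_lt _ (by omega)
    have e3 : a * (K / a) + a ≤ a * y := by
      calc a * (K/a) + a = a * (K/a + 1) := by ring
      _ ≤ a * y := Nat.mul_le_mul_left a (by omega)
    omega
  calc (∑ y ∈ Icc 1 n, ∑ x ∈ Icc 1 n, if (x, y).1 + a * (x, y).2 ≤ K then 1 else 0)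
      = ∑ y ∈ Icc 1 n, (K - a * y) := Finset.sum_congr rfl (fun y _ => h1 y)
    _ = ∑ y ∈ Icc 1 (K / a), (K - a * y) :=
        (Finset.sum_subset (Finset.Icc_subset_Icc_right (le_trans (Nat.div_le_self K a) hK)) h2).symm

lemma tri_bound (a n K : ℕ) (ha : 1 ≤ a) (hK : K ≤ n) :
    |((((Icc 1 n ×ˢ Icc 1 n).filter fun p => p.1 + a * p.2 ≤ K).card : ℝ))
      - (K:ℝ)^2 / (2*a)| ≤ ((a:ℝ) + K) / 2 := by
  rw [tri_card a n K ha hK]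
  set q := K / a with hq
  have hle : ∀ y ∈ Icc 1 q, a * y ≤ K := by
    intro y hy
    simp only [Finset.mem_Icc] at hy
    calc a * y ≤ a * q := Nat.mul_le_mul_left a hy.2
      _ ≤ K := by rw [hq, Nat.mul_comm]; exact Nat.div_mul_le_self K a
  have hcast : ((∑ y ∈ Icc 1 q, (K - a * y) : ℕ) : ℝ)
      = ∑ y ∈ Icc 1 q, ((K:ℝ) - a * y) := by
    push_cast [Nat.cast_sum]
    refine Finset.sum_congr rfl (fun y hy => ?_)
    have := hle y hy
    push_cast [Nat.cast_sub this]
    ring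
  rw [hcast]
  have hsum : ∑ y ∈ Icc 1 q, ((K:ℝ) - a * y) = q * K - a * (q*(q+1)/2) := by
    rw [Finset.sum_sub_distrib, Finset.sum_const, ← Finset.mul_sum, gauss, Nat.card_Icc]
    simp
  rw [hsum]
  have e1 : a * q + K % a = K := Nat.div_add_mod K a
  have e2 : K % a < a := Nat.mod_lt _ (by omega)
  set r : ℝ := ((K % a : ℕ) : ℝ) with hr
  have er1 : (a:ℝ) * q + r = K := by rw [hr]; exact_mod_cast e1
  have er2 : r < a := by rw [hr]; exact_mod_cast e2
  have er3 : 0 ≤ r := by positivity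
  have ha' : (0:ℝ) < a := by exact_mod_cast (by omega : 0 < a)
  have hKr : r ≤ K := by
    rw [hr]; exact_mod_cast Nat.cast_le.mpr (Nat.mod_le K a)
  have hq' : (q:ℝ) = ((K:ℝ) - r)/a := by
    field_simp; linarith
  have key : (q:ℝ) * K - a * (q*(q+1)/2) - K^2/(2*a)
      = -((r^2 + a*((K:ℝ) - r))/(2*a)) := by
    rw [hq']; field_simp; ring
  rw [key, abs_neg, abs_div, abs_of_nonneg (by nlinarith), abs_of_nonneg (by positivity)]
  rw [div_le_div_iff₀ (by positivity) (by norm_num)]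
  nlinarith [er2, er3, Nat.cast_nonneg (α := ℝ) K]

lemma color_eq_iff (R B s t : ℕ) :
    ((if s ≤ R then false else if s ≤ R + B then (true:Bool) else false)
     = (if t ≤ R then false else if t ≤ R + B then true else false))
    ↔ ((s ≤ R ∨ R + B < s) ↔ (t ≤ R ∨ R + B < t)) := by
  split_ifs <;> simp <;> omega

theorem optimal_coloring_xay_count (a : ℕ) (ha : 2 ≤ a) :
    ∃ C : ℝ, ∀ n : ℕ, a * (a + 1) * (a ^ 2 + 2 * a + 3) ∣ n →
      let d := a ^ 2 + 2 * a + 3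
      let c : ℕ → Bool := fun i =>
        if i ≤ (a + 1) * n / d then false
        else if i ≤ (a + 1) * n / d + (a ^ 2 + a + 1) * n / d then true
        else false
      |((((Finset.Icc 1 n ×ˢ Finset.Icc 1 n).filter
            (fun p => p.1 + a * p.2 ≤ n ∧ c p.1 = c p.2
              ∧ c p.2 = c (p.1 + a * p.2))).card : ℝ))
          - (n : ℝ) ^ 2 / (2 * a * ((a : ℝ) ^ 2 + 2 * a + 3))| ≤ C * n := by
  refine ⟨3, fun n hn => ?_⟩
  intro d c
  rcases Nat.eq_zero_or_pos n with hn0 | hnpos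
  · subst hn0; simp
  obtain ⟨k, hk⟩ := hn
  have hd0 : 0 < a ^ 2 + 2 * a + 3 := by positivity
  set m : ℕ := a * (a + 1) * k with hm
  have hnm : n = (a ^ 2 + 2 * a + 3) * m := by rw [hk, hm]; ring
  have hdiv1 : (a + 1) * n / (a ^ 2 + 2 * a + 3) = (a + 1) * m := by
    rw [hnm, show (a+1) * ((a^2+2*a+3) * m) = (a^2+2*a+3) * ((a+1)*m) by ring,
      Nat.mul_div_cancel_left _ hd0]
  have hdiv2 : (a ^ 2 + a + 1) * n / (a ^ 2 + 2 * a + 3) = (a ^ 2 + a + 1) * m := by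
    rw [hnm, show (a^2+a+1) * ((a^2+2*a+3) * m) = (a^2+2*a+3) * ((a^2+a+1)*m) by ring,
      Nat.mul_div_cancel_left _ hd0]
  have hc : c = fun i =>
      if i ≤ (a+1)*m then false
      else if i ≤ (a+1)*m + (a^2+a+1)*m then true else false := by
    funext i
    simp only [c, d, hdiv1, hdiv2]
  set R : ℕ := (a + 1) * m with hR
  set Bb : ℕ := (a ^ 2 + a + 1) * m with hBb
  -- global nonlinear facts
  have hA : R + Bb + m = n := by rw [hnm, hR, hBb]; ring
  have hmR : m ≤ R := by rw [hR]; nlinarith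
  have hf3 : ∀ y : ℕ, R + Bb < y → n < a * y := by
    intro y hy
    have hco : a^2+2*a+3 ≤ a^3+2*a^2+2*a := by nlinarith
    calc n = (a^2+2*a+3)*m := hnm
    _ ≤ (a^3+2*a^2+2*a)*m := Nat.mul_le_mul_right m hco
    _ < (a^3+2*a^2+2*a)*m + a := by omega
    _ = a * (R + Bb + 1) := by rw [hR, hBb]; ring
    _ ≤ a * y := Nat.mul_le_mul_left a (by omega)
  have hf4 : ∀ x y : ℕ, x ≤ R → y ≤ R → x + a*y ≤ R + Bb := by
    intro x y hx hy
    have h5 : a * y ≤ a * R := Nat.mul_le_mul_left a hy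
    have e1 : a * R = (a^2+a) * m := by rw [hR]; ring
    have e2 : (a+1)*m + (a^2+a)*m + m = (a+1)*m + (a^2+a+1)*m := by ring
    rw [hR, hBb] at *
    omega
  have haR : a * R + m = Bb := by rw [hR, hBb]; ring
  -- rewrite the filter set
  have hset : ((Finset.Icc 1 n ×ˢ Finset.Icc 1 n).filter
        (fun p => p.1 + a * p.2 ≤ n ∧ c p.1 = c p.2
          ∧ c p.2 = c (p.1 + a * p.2)))
      = ((Finset.Icc 1 n ×ˢ Finset.Icc 1 n).filter
        (fun p => p.1 + a * p.2 ≤ R ∨ (R < p.1 ∧ R < p.2 ∧ p.1 + a*p.2 ≤ R + Bb)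
          ∨ (R + Bb < p.1 ∧ p.1 + a*p.2 ≤ n))) := by
    apply Finset.filter_congr
    rintro ⟨x, y⟩ hp
    simp only [Finset.mem_product, Finset.mem_Icc] at hp
    obtain ⟨⟨hx1, hx2⟩, hy1, hy2⟩ := hp
    rw [hc]
    simp only []
    rw [color_eq_iff, color_eq_iff]
    have hw : y ≤ a * y := Nat.le_mul_of_pos_left y (by omega)
    have f3 := hf3 y
    have f4 := hf4 x y
    omega
  rw [hset, Finset.filter_or, Finset.filter_or,
    Finset.card_union_of_disjoint, Finset.card_union_of_disjoint]
  rotate_left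
  · rw [Finset.disjoint_left]
    rintro ⟨x, y⟩ h1 h2
    simp only [Finset.mem_filter] at h1 h2
    omega
  · rw [Finset.disjoint_left]
    rintro ⟨x, y⟩ h1 h2
    simp only [Finset.mem_filter, Finset.mem_union] at h1 h2
    omega
  -- compute cards of pieces 2 and 3
  have hcard2 : ((Finset.Icc 1 n ×ˢ Finset.Icc 1 n).filter
        (fun p => R < p.1 ∧ R < p.2 ∧ p.1 + a*p.2 ≤ R + Bb)).card
      = ((Finset.Icc 1 n ×ˢ Finset.Icc 1 n).filter
        (fun p => p.1 + a * p.2 ≤ m)).card := by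
    apply Finset.card_nbij' (fun p => (p.1 - R, p.2 - R)) (fun p => (p.1 + R, p.2 + R))
    · rintro ⟨x, y⟩ hp
      simp only [Finset.mem_coe, Finset.mem_filter, Finset.mem_product, Finset.mem_Icc] at hp ⊢
      obtain ⟨⟨⟨hx1, hx2⟩, hy1, hy2⟩, hxR, hyR, hsum⟩ := hp
      have e : a * (y - R) + a * R = a * y := by
        rw [← Nat.mul_add, Nat.sub_add_cancel (le_of_lt hyR)]
      omega
    · rintro ⟨u, v⟩ hp
      simp only [Finset.mem_coe, Finset.mem_filter, Finset.mem_product, Finset.mem_Icc] at hp ⊢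
      obtain ⟨⟨⟨hu1, hu2⟩, hv1, hv2⟩, hsum⟩ := hp
      have e : a * (v + R) = a * v + a * R := by ring
      have hv : v ≤ a * v := Nat.le_mul_of_pos_left v (by omega)
      omega
    · rintro ⟨x, y⟩ hp
      simp only [Finset.mem_coe, Finset.mem_filter, Finset.mem_product, Finset.mem_Icc] at hp
      have : R ≤ x := le_of_lt hp.2.1
      have : R ≤ y := le_of_lt hp.2.2.1
      simp only [Prod.mk.injEq]
      omega
    · rintro ⟨u, v⟩ hp
      simp only [Prod.mk.injEq]
      omega
  have hcard3 : ((Finset.Icc 1 n ×ˢ Finset.Icc 1 n).filter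
        (fun p => R + Bb < p.1 ∧ p.1 + a*p.2 ≤ n)).card
      = ((Finset.Icc 1 n ×ˢ Finset.Icc 1 n).filter
        (fun p => p.1 + a * p.2 ≤ m)).card := by
    apply Finset.card_nbij' (fun p => (p.1 - (R + Bb), p.2)) (fun p => (p.1 + (R + Bb), p.2))
    · rintro ⟨x, y⟩ hp
      simp only [Finset.mem_coe, Finset.mem_filter, Finset.mem_product, Finset.mem_Icc] at hp ⊢
      omega
    · rintro ⟨u, v⟩ hp
      simp only [Finset.mem_coe, Finset.mem_filter, Finset.mem_product, Finset.mem_Icc] at hp ⊢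
      have hv : v ≤ a * v := Nat.le_mul_of_pos_left v (by omega)
      omega
    · rintro ⟨x, y⟩ hp
      simp only [Finset.mem_coe, Finset.mem_filter, Finset.mem_product, Finset.mem_Icc] at hp
      simp only [Prod.mk.injEq]
      exact ⟨by omega, trivial⟩
    · rintro ⟨u, v⟩ hp
      simp only [Prod.mk.injEq]
      exact ⟨by omega, trivial⟩
  rw [hcard2, hcard3]
  -- now use tri_bound
  have hRn : R ≤ n := by omega
  have hmn : m ≤ n := by omega
  have hb1 := tri_bound a n R (by omega) hRn
  have hb2 := tri_bound a n m (by omega) hmn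
  have han : a ≤ n := by
    have h1 : a * (a + 1) * (a ^ 2 + 2 * a + 3) ≤ n := Nat.le_of_dvd hnpos ⟨k, hk⟩
    nlinarith
  have htarget : (n:ℝ)^2/(2*(a:ℝ)*((a:ℝ)^2+2*a+3))
      = (R:ℝ)^2/(2*(a:ℝ)) + ((m:ℝ)^2/(2*(a:ℝ)) + (m:ℝ)^2/(2*(a:ℝ))) := by
    have e1 : (n:ℝ) = ((a:ℝ)^2+2*(a:ℝ)+3) * m := by exact_mod_cast hnm
    have e2 : (R:ℝ) = ((a:ℝ)+1) * m := by exact_mod_cast hR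
    have ha' : (0:ℝ) < a := by exact_mod_cast (by omega : 0 < a)
    rw [e1, e2]
    field_simp
    ring
  push_cast
  rw [htarget]
  have habs : ∀ x t x' t' : ℝ, |x - t| ≤ x' → |((x:ℝ)) - t| ≤ x' := fun _ _ _ _ h => h
  have hcast : ∀ K : ℕ, K ≤ n → True := fun _ _ => trivial
  have hRn' : (R:ℝ) ≤ n := by exact_mod_cast hRn
  have hmn' : (m:ℝ) ≤ n := by exact_mod_cast hmn
  have han' : (a:ℝ) ≤ n := by exact_mod_cast han
  calc |((((Finset.Icc 1 n ×ˢ Finset.Icc 1 n).filter fun p => p.1 + a * p.2 ≤ R).card : ℝ)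
        + ((((Finset.Icc 1 n ×ˢ Finset.Icc 1 n).filter fun p => p.1 + a * p.2 ≤ m).card : ℝ)
        + (((Finset.Icc 1 n ×ˢ Finset.Icc 1 n).filter fun p => p.1 + a * p.2 ≤ m).card : ℝ)))
        - ((R:ℝ)^2/(2*(a:ℝ)) + ((m:ℝ)^2/(2*(a:ℝ)) + (m:ℝ)^2/(2*(a:ℝ))))|
      ≤ |(((Finset.Icc 1 n ×ˢ Finset.Icc 1 n).filter fun p => p.1 + a * p.2 ≤ R).card : ℝ)
          - (R:ℝ)^2/(2*(a:ℝ))|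
        + (|(((Finset.Icc 1 n ×ˢ Finset.Icc 1 n).filter fun p => p.1 + a * p.2 ≤ m).card : ℝ)
          - (m:ℝ)^2/(2*(a:ℝ))|
        + |(((Finset.Icc 1 n ×ˢ Finset.Icc 1 n).filter fun p => p.1 + a * p.2 ≤ m).card : ℝ)
          - (m:ℝ)^2/(2*(a:ℝ))|) := by
        have := abs_add_le (((((Finset.Icc 1 n ×ˢ Finset.Icc 1 n).filter fun p => p.1 + a * p.2 ≤ R).card : ℝ)) - (R:ℝ)^2/(2*(a:ℝ)))
          ((((((Finset.Icc 1 n ×ˢ Finset.Icc 1 n).filter fun p => p.1 + a * p.2 ≤ m).card : ℝ)) - (m:ℝ)^2/(2*(a:ℝ)))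
           + ((((((Finset.Icc 1 n ×ˢ Finset.Icc 1 n).filter fun p => p.1 + a * p.2 ≤ m).card : ℝ)) - (m:ℝ)^2/(2*(a:ℝ)))))
        have h2 := abs_add_le (((((Finset.Icc 1 n ×ˢ Finset.Icc 1 n).filter fun p => p.1 + a * p.2 ≤ m).card : ℝ)) - (m:ℝ)^2/(2*(a:ℝ)))
          (((((Finset.Icc 1 n ×ˢ Finset.Icc 1 n).filter fun p => p.1 + a * p.2 ≤ m).card : ℝ)) - (m:ℝ)^2/(2*(a:ℝ)))
        calc _ = |((((Finset.Icc 1 n ×ˢ Finset.Icc 1 n).filter fun p => p.1 + a * p.2 ≤ R).card : ℝ) - (R:ℝ)^2/(2*(a:ℝ)))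
            + (((((Finset.Icc 1 n ×ˢ Finset.Icc 1 n).filter fun p => p.1 + a * p.2 ≤ m).card : ℝ) - (m:ℝ)^2/(2*(a:ℝ)))
            + ((((Finset.Icc 1 n ×ˢ Finset.Icc 1 n).filter fun p => p.1 + a * p.2 ≤ m).card : ℝ) - (m:ℝ)^2/(2*(a:ℝ))))| := by congr 1; ring
        _ ≤ _ := by linarith [this, h2]
    _ ≤ ((a:ℝ) + R)/2 + (((a:ℝ) + m)/2 + ((a:ℝ) + m)/2) := by linarith [hb1, hb2]
    _ ≤ 3 * n := by linarith
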